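/- For every n ≥ 1, the set D is a convex subset of ℝⁿ. -/
import Mathlib


open Finset

/-- The extension of a point `t ∈ ℝⁿ` (coordinates `t₁,…,tₙ` indexed by `Fin n`,
so that `t i` is `t_{i+1}`) to indices `0,1,…` with the convention `t₀ = 1`
(and value `1` outside `{0,1,…,n}`, which is irrelevant). -/
noncomputable def extCoord (n : ℕ) (t : Fin n → ℝ) (i : ℕ) : ℝ :=
  if h : 1 ≤ i ∧ i ≤ n then t ⟨i - 1, by omega⟩ else 1

/-- The set `D = {t ∈ ℝⁿ : tᵢ > 0 for all i, and tⱼ² ≤ tⱼ₋₁·tⱼ₊₁ for all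
j = 1,…,n−1, with the convention t₀ = 1}`. -/
def Dset (n : ℕ) : Set (Fin n → ℝ) :=
  {t | (∀ i, 0 < t i) ∧
    ∀ j, 1 ≤ j → j ≤ n - 1 → (extCoord n t j) ^ 2 ≤ extCoord n t (j - 1) * extCoord n t (j + 1)}

lemma key (a b c a' b' c' l m : ℝ) (ha : 0 ≤ a) (hc : 0 ≤ c) (ha' : 0 ≤ a')
    (hc' : 0 ≤ c') (hb : 0 ≤ b) (hb' : 0 ≤ b') (hl : 0 ≤ l) (hm : 0 ≤ m)
    (h1 : b ^ 2 ≤ a * c) (h2 : b' ^ 2 ≤ a' * c') :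
    (l * b + m * b') ^ 2 ≤ (l * a + m * a') * (l * c + m * c') := by
  have h4 : (2 * (b * b')) ^ 2 ≤ (a * c' + a' * c) ^ 2 := by
    nlinarith [sq_nonneg (a * c' - a' * c),
      mul_le_mul h1 h2 (sq_nonneg b') (mul_nonneg ha hc)]
  have h3 : 2 * (b * b') ≤ a * c' + a' * c := by
    have := (pow_le_pow_iff_left₀ (by positivity)
      (by positivity : (0:ℝ) ≤ a * c' + a' * c) (two_ne_zero)).mp h4
    linarith
  nlinarith [mul_nonneg (mul_nonneg hl hm) (sub_nonneg.mpr h3), sq_nonneg l, sq_nonneg m]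

lemma extCoord_pos (n : ℕ) (t : Fin n → ℝ) (ht : ∀ i, 0 < t i) (i : ℕ) :
    0 < extCoord n t i := by
  unfold extCoord; split
  · exact ht _
  · norm_num

/-- For every `n ≥ 1`, the set `D` is a convex subset of `ℝⁿ`. -/
theorem stmt2 (n : ℕ) (hn : 1 ≤ n) : Convex ℝ (Dset n) := by
  intro x hx y hy l m hl hm hlm
  have hext : ∀ i, extCoord n (l • x + m • y) i
      = l * extCoord n x i + m * extCoord n y i := by
    intro i
    unfold extCoord
    by_cases h : 1 ≤ i ∧ i ≤ n
    · simp [h, Pi.add_apply, Pi.smul_apply, smul_eq_mul]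
    · simp [h]; linarith
  constructor
  · intro i
    have hxi := hx.1 i
    have hyi := hy.1 i
    simp only [Pi.add_apply, Pi.smul_apply, smul_eq_mul]
    rcases hl.eq_or_lt with h | h
    · have hm1 : m = 1 := by linarith
      simp [← h, hm1, hyi]
    · exact add_pos_of_pos_of_nonneg (mul_pos h hxi) (mul_nonneg hm hyi.le)
  · intro j hj1 hj2
    rw [hext, hext, hext]
    exact key _ _ _ _ _ _ _ _
      (extCoord_pos n x hx.1 _).le (extCoord_pos n x hx.1 _).le
      (extCoord_pos n y hy.1 _).le (extCoord_pos n y hy.1 _).le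
      (extCoord_pos n x hx.1 _).le (extCoord_pos n y hy.1 _).le
      hl hm (hx.2 j hj1 hj2) (hy.2 j hj1 hj2)
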